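/- Let $1<p<\infty$, $m \ge 1$ an integer with $mp > n$. There is a constant $C>0$ such that for all $\xi \in S$ and $0<\delta<1$, the function $f_{\xi,\delta}(z) = (\log\frac{2}{\delta})^{-1/p} \log\frac{2}{1-\langle z,(1-\delta)\xi\rangle}$ satisfies: (a) $|f_{\xi,\delta}(z)| \ge c\,(\log\frac{2}{\delta})^{1-1/p}$ for all $z \in Q_\delta(\xi)$, with $c>0$ independent of $\xi,\delta$. -/

import Mathlib

open MeasureTheory Metric Set

noncomputable section

/-- `C^n` as a Euclidean space. -/
abbrev En (n : ℕ) := EuclideanSpace ℂ (Fin n)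

instance En.measureSpace {n : ℕ} : MeasureSpace (En n) :=
  { volume := Measure.map (WithLp.toLp 2) (volume : Measure (Fin n → ℂ)) }

/-- The Hermitian pairing of z and w. -/
def herm {n : ℕ} (z w : En n) : ℂ := ∑ j, z j * (starRingEnd ℂ) (w j)

/-- The Carleson box Q_delta(xi). -/
def Qbox {n : ℕ} (δ : ℝ) (ξ : En n) : Set (En n) :=
  {z | z ∈ Metric.ball (0 : En n) 1 ∧ ‖1 - herm z ξ‖ < δ}

/-- The pseudo-hyperbolic ball E(w,r), described via the identity
1 - |phi_w z|^2 = (1-|w|^2)(1-|z|^2)/|1-herm z w|^2. -/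
def Eball {n : ℕ} (w : En n) (r : ℝ) : Set (En n) :=
  {z | z ∈ Metric.ball (0 : En n) 1 ∧
    1 - r ^ 2 < (1 - ‖w‖ ^ 2) * (1 - ‖z‖ ^ 2) / ‖1 - herm z w‖ ^ 2}

/-- The radial derivative R f (z) = sum_j z_j d f / d z_j, i.e. the derivative
of f at z in the direction z. -/
def radialDeriv {n : ℕ} (f : En n → ℂ) (z : En n) : ℂ := fderiv ℂ f z z


lemma key_log (δ t : ℝ) (hδ0 : 0 < δ) (hδ1 : δ < 1) (ht0 : 0 < t)
    (ht1 : t ≤ 2*δ) (ht2 : t ≤ 2-δ) :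
    (1/4) * Real.log (2/δ) ≤ Real.log 2 - Real.log t := by
  have hlogδ : Real.log (2/δ) = Real.log 2 - Real.log δ :=
    Real.log_div two_ne_zero (ne_of_gt hδ0)
  rcases le_or_gt δ (2/3) with h | h
  · have h1 : Real.log t ≤ Real.log (2*δ) := Real.log_le_log ht0 ht1
    have h2 : Real.log (2*δ) = Real.log 2 + Real.log δ :=
      Real.log_mul two_ne_zero (ne_of_gt hδ0)
    have h3 : Real.log δ ≤ Real.log (2/3) := Real.log_le_log hδ0 h
    have h4 : Real.log (2/3) = - Real.log (3/2) := by
      rw [← Real.log_inv]; norm_num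
    have h5 : Real.log 2 ≤ 3 * Real.log (3/2) := by
      have h6 : Real.log 2 ≤ Real.log (27/8) := Real.log_le_log (by norm_num) (by norm_num)
      have h7 : Real.log (27/8 : ℝ) = 3 * Real.log (3/2) := by
        rw [show (27/8 : ℝ) = (3/2)^3 by norm_num, Real.log_pow]; norm_num
      linarith
    linarith
  · have h1 : Real.log t ≤ Real.log (4/3) := Real.log_le_log ht0 (by linarith)
    have h2 : Real.log (2/δ) ≤ Real.log 3 :=
      Real.log_le_log (by positivity) (by rw [div_le_iff₀ hδ0]; linarith)
    have h3 : Real.log 3 ≤ 4 * Real.log (3/2) := by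
      have h6 : Real.log 3 ≤ Real.log (81/16) := Real.log_le_log (by norm_num) (by norm_num)
      have h7 : Real.log (81/16 : ℝ) = 4 * Real.log (3/2) := by
        rw [show (81/16 : ℝ) = (3/2)^4 by norm_num, Real.log_pow]; norm_num
      linarith
    have h4 : Real.log 2 - Real.log (4/3) = Real.log (3/2) := by
      rw [show Real.log (3/2 : ℝ) = Real.log (2/(4/3)) by norm_num,
        Real.log_div two_ne_zero (by norm_num)]
    linarith

/-- lower bound for the logarithmic test functions on the Carleson box. -/
theorem stmt_11 (n : ℕ) (p : ℝ) (hp : 1 < p) (m : ℕ) (hm : 0 < m)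
    (hmp : (n : ℝ) < m * p) :
    ∃ c : ℝ, 0 < c ∧ ∀ ξ ∈ Metric.sphere (0 : En n) 1, ∀ δ : ℝ, 0 < δ → δ < 1 →
      ∀ z ∈ Qbox δ ξ,
        c * Real.log (2 / δ) ^ (1 - 1 / p) ≤
          ‖((Real.log (2 / δ) ^ (-(1 / p)) : ℝ) : ℂ) *
            Complex.log (2 / (1 - herm z ((1 - δ) • ξ)))‖ := by
  refine ⟨1/4, by norm_num, ?_⟩
  intro ξ hξ δ hδ0 hδ1 z hz
  obtain ⟨hzball, hzQ⟩ := hz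
  have hξn : ‖ξ‖ = 1 := by simpa using hξ
  have hzn : ‖z‖ < 1 := by simpa using hzball
  set a : ℂ := herm z ξ with ha_def
  have hherm : a = (inner ℂ ξ z : ℂ) := by
    simp [ha_def, herm, PiLp.inner_apply, mul_comm]
  have ha : ‖a‖ < 1 := by
    rw [hherm]
    calc ‖(inner ℂ ξ z : ℂ)‖ = ‖(inner ℂ ξ z : ℂ)‖ := rfl
      _ ≤ ‖ξ‖ * ‖z‖ := norm_inner_le_norm ξ z
      _ < 1 := by rw [hξn, one_mul]; exact hzn
  have hsc : herm z ((1-δ) • ξ) = ((1-δ : ℝ) : ℂ) * a := by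
    rw [ha_def, herm, herm, Finset.mul_sum]
    refine Finset.sum_congr rfl fun j _ => ?_
    have : ((1-δ : ℝ) • ξ) j = ((1-δ : ℝ) : ℂ) * ξ j := by
      simp [Complex.real_smul]
    rw [this, map_mul, Complex.conj_ofReal]
    ring
  set w : ℂ := 1 - ((1-δ : ℝ) : ℂ) * a with hw_def
  have habs_a : ‖((1-δ : ℝ) : ℂ) * a‖ < 1 := by
    rw [norm_mul, Complex.norm_real, Real.norm_eq_abs, abs_of_nonneg (by linarith)]
    nlinarith [norm_nonneg a]
  have hw0 : w ≠ 0 := by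
    intro h
    rw [hw_def, sub_eq_zero] at h
    rw [← h] at habs_a
    simp at habs_a
  set t : ℝ := ‖w‖ with ht_def
  have ht0 : 0 < t := norm_pos_iff.mpr hw0
  have ht1 : t ≤ 2*δ := by
    have hsplit : w = (1 - a) + (δ : ℂ) * a := by
      rw [hw_def]; push_cast; ring
    calc t = ‖(1 - a) + (δ : ℂ) * a‖ := by rw [ht_def, hsplit]
      _ ≤ ‖1 - a‖ + ‖(δ : ℂ) * a‖ := norm_add_le _ _
      _ ≤ δ + δ * 1 := by
          refine add_le_add (le_of_lt hzQ) ?_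
          rw [norm_mul, Complex.norm_real, Real.norm_eq_abs, abs_of_pos hδ0]
          exact mul_le_mul_of_nonneg_left (le_of_lt ha) (le_of_lt hδ0)
      _ = 2*δ := by ring
  have ht2 : t ≤ 2-δ := by
    have htri : ‖1 - ((1-δ : ℝ) : ℂ) * a‖ ≤
        ‖(1:ℂ)‖ + ‖((1-δ : ℝ) : ℂ) * a‖ := by
      simpa [sub_eq_add_neg] using norm_add_le (1:ℂ) (-(((1-δ : ℝ) : ℂ) * a))
    calc t ≤ ‖(1:ℂ)‖ + ‖((1-δ : ℝ) : ℂ) * a‖ := by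
          rw [ht_def, hw_def]; exact htri
      _ ≤ 1 + (1-δ) := by
          refine add_le_add (by simp) ?_
          rw [norm_mul, Complex.norm_real, Real.norm_eq_abs, abs_of_nonneg (by linarith)]
          nlinarith [norm_nonneg a]
      _ = 2-δ := by ring
  have hlog2δ : 0 < Real.log (2/δ) := Real.log_pos (by rw [lt_div_iff₀ hδ0]; linarith)
  have habsdiv : ‖2 / w‖ = 2 / t := by
    rw [norm_div, ht_def]; norm_num
  have hre : (Complex.log (2 / w)).re = Real.log 2 - Real.log t := by
    rw [Complex.log_re, habsdiv, Real.log_div two_ne_zero (ne_of_gt ht0)]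
  have hL : (1/4) * Real.log (2/δ) ≤ ‖Complex.log (2 / w)‖ :=
    calc (1/4) * Real.log (2/δ) ≤ Real.log 2 - Real.log t :=
          key_log δ t hδ0 hδ1 ht0 ht1 ht2
      _ = (Complex.log (2 / w)).re := hre.symm
      _ ≤ |(Complex.log (2 / w)).re| := le_abs_self _
      _ ≤ ‖Complex.log (2 / w)‖ := Complex.abs_re_le_norm _
  set r : ℝ := Real.log (2 / δ) ^ (-(1 / p)) with hr_def
  have hr : 0 < r := Real.rpow_pos_of_pos hlog2δ _
  have hrmul : r * Real.log (2/δ) = Real.log (2/δ) ^ (1 - 1/p) := by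
    rw [show (1 - 1/p : ℝ) = -(1/p) + 1 by ring, Real.rpow_add hlog2δ, Real.rpow_one, hr_def]
  rw [hsc, ← hw_def, norm_mul, Complex.norm_real, Real.norm_eq_abs, abs_of_pos hr]
  calc (1/4 : ℝ) * Real.log (2 / δ) ^ (1 - 1 / p)
      = r * ((1/4) * Real.log (2/δ)) := by rw [← hrmul]; ring
    _ ≤ r * ‖Complex.log (2 / w)‖ :=
        mul_le_mul_of_nonneg_left hL (le_of_lt hr)
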